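/- If 𝒜 is a cross-d-wise Oddtown on an n-element ground set, then |𝒜| ≤ (d-1)·n. -/

import Mathlib

open Finset

namespace CrossOddtownAux

variable {n : ℕ}

/-- characteristic vector over `ZMod 2` -/
def chi (s : Finset (Fin n)) (x : Fin n) : ZMod 2 := if x ∈ s then 1 else 0

lemma prod_chi {d : ℕ} (A : Fin d → Finset (Fin n)) (x : Fin n) :
    ∏ i, chi (A i) x = chi (Finset.univ.inf A) x := by
  by_cases h : ∀ i, x ∈ A i
  · have h1 : x ∈ Finset.univ.inf A := Finset.mem_inf.mpr fun i _ => h i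
    have h2 : ∀ i ∈ Finset.univ, chi (A i) x = 1 := fun i _ => if_pos (h i)
    rw [Finset.prod_congr rfl h2, Finset.prod_const_one, chi, if_pos h1]
  · push_neg at h
    obtain ⟨i, hi⟩ := h
    have h1 : x ∉ Finset.univ.inf A := fun hx => hi (Finset.mem_inf.mp hx i (Finset.mem_univ i))
    rw [Finset.prod_eq_zero (Finset.mem_univ i) (by simp [chi, hi])]
    simp [chi, h1]

lemma card_inf_cast {d : ℕ} (A : Fin d → Finset (Fin n)) :
    (((Finset.univ.inf A).card : ZMod 2)) = ∑ x, ∏ i, chi (A i) x := by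
  simp_rw [prod_chi]
  unfold chi
  rw [Finset.sum_ite_mem, Finset.univ_inter, Finset.sum_const, Finset.card_eq_sum_ones]
  simp

lemma zmod2_cases : ∀ a : ZMod 2, a = 0 ∨ a = 1 := by decide

lemma main (n : ℕ) : ∀ d, 2 ≤ d → ∀ m : ℕ, ∀ f : Fin m → Fin d → Finset (Fin n),
    (∀ j, Odd ((Finset.univ.inf (f j)).card)) →
    (∀ g : Fin d → Fin m, Function.Injective g →
      Even ((Finset.univ.inf (fun i => f (g i) i)).card)) →
    m ≤ (d - 1) * n := by
  intro d hd
  induction d, hd using Nat.le_induction with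
  | base =>
    intro m f hodd heven
    have key : ∀ j k : Fin m, (∑ x, chi (f j 0) x * chi (f k 1) x)
        = (((Finset.univ.inf (fun i : Fin 2 => f (![j, k] i) i)).card : ZMod 2)) := by
      intro j k
      rw [card_inf_cast]
      refine Finset.sum_congr rfl fun x _ => ?_
      rw [Fin.prod_univ_two]
      simp
    have hli : LinearIndependent (ZMod 2) (fun j : Fin m => chi (f j 0)) := by
      rw [Fintype.linearIndependent_iff]
      intro c hc j0
      have h0 : (0 : ZMod 2) = ∑ j, c j * ∑ x, chi (f j 0) x * chi (f j0 1) x := by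
        have hc' : ∀ x, ∑ j, c j * chi (f j 0) x = 0 := by
          intro x
          have := congrFun hc x
          simpa using this
        calc (0 : ZMod 2) = ∑ x, (∑ j, c j * chi (f j 0) x) * chi (f j0 1) x := by
              simp [hc']
          _ = ∑ j, c j * ∑ x, chi (f j 0) x * chi (f j0 1) x := by
              simp_rw [Finset.sum_mul, Finset.mul_sum, mul_assoc]
              rw [Finset.sum_comm]
      rw [Finset.sum_eq_single j0] at h0
      · have hjj : (fun i : Fin 2 => f (![j0, j0] i) i) = f j0 := by
          funext i
          fin_cases i <;> rfl
        rw [key j0 j0, hjj, ZMod.natCast_eq_one_iff_odd.mpr (hodd j0), mul_one] at h0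
        exact h0.symm
      · intro j _ hj
        have hinj : Function.Injective ![j, j0] := by
          rw [show (![j, j0] : Fin 2 → Fin m) = Fin.cons j ![j0] from rfl,
            Fin.cons_injective_iff]
          refine ⟨?_, fun a b _ => Subsingleton.elim a b⟩
          rintro ⟨i, hi⟩
          fin_cases i
          simp only [Matrix.cons_val_zero] at hi
          exact hj hi.symm
        rw [key j j0, ZMod.natCast_eq_zero_iff_even.mpr (heven ![j, j0] hinj), mul_zero]
      · intro h; exact absurd (Finset.mem_univ j0) h
    have hcard := hli.fintype_card_le_finrank
    rw [Module.finrank_fintype_fun_eq_card, Fintype.card_fin, Fintype.card_fin] at hcard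
    simpa using hcard
  | succ d hd ih =>
    intro m f hodd heven
    obtain ⟨e, rfl⟩ : ∃ e, d = e + 1 := ⟨d - 1, by omega⟩
    classical
    set v : Fin m → (Fin n → ZMod 2) := fun j => chi (f j 0) with hv
    obtain ⟨I, hIli, hIspan⟩ := exists_maximal_linearIndepOn (ZMod 2) v
    haveI : Fintype I := Fintype.ofFinite I
    have hIcard : Fintype.card I ≤ n := by
      have := LinearIndependent.fintype_card_le_finrank hIli
      rwa [Module.finrank_fintype_fun_eq_card, Fintype.card_fin] at this
    have hkey : ∀ j : Fin m, j ∉ I → ∃ t : Fin m, t ∈ I ∧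
        Odd ((Finset.univ.inf
          (Fin.cons (f t 0) (fun i : Fin (e + 1) => f j i.succ) : Fin (e + 2) → Finset (Fin n))).card) := by
      intro j hj
      obtain ⟨a, ha0, haspan⟩ := hIspan j hj
      have ha1 : a = 1 := (zmod2_cases a).resolve_left ha0
      rw [ha1, one_smul, Set.image_eq_range, Submodule.mem_span_range_iff_exists_fun] at haspan
      obtain ⟨c, hcsum⟩ := haspan
      by_contra hcon
      push_neg at hcon
      have h1 : ((Finset.univ.inf (f j)).card : ZMod 2) = 1 := ZMod.natCast_eq_one_iff_odd.mpr (hodd j)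
      rw [card_inf_cast] at h1
      have h2 : ∀ x, ∏ i, chi (f j i) x
          = (∑ t : I, c t * v t x) * ∏ i : Fin (e + 1), chi (f j i.succ) x := by
        intro x
        rw [Fin.prod_univ_succ]
        congr 1
        have := congrFun hcsum x
        simp only [Finset.sum_apply, Pi.smul_apply, smul_eq_mul] at this
        exact this.symm
      rw [Finset.sum_congr rfl fun x _ => h2 x] at h1
      have h3 : ∑ x, (∑ t : I, c t * v t x) * (∏ i : Fin (e + 1), chi (f j i.succ) x)
          = ∑ t : I, c t * ∑ x, v t x * ∏ i : Fin (e + 1), chi (f j i.succ) x := by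
        simp_rw [Finset.sum_mul, Finset.mul_sum, mul_assoc]
        rw [Finset.sum_comm]
      rw [h3] at h1
      have h4 : ∀ t : I, c t * ∑ x, v t x * ∏ i : Fin (e + 1), chi (f j i.succ) x = 0 := by
        intro t
        have heq : ∑ x, v t x * ∏ i : Fin (e + 1), chi (f j i.succ) x
            = (((Finset.univ.inf
              (Fin.cons (f (t : Fin m) 0) (fun i : Fin (e + 1) => f j i.succ) : Fin (e + 2) → Finset (Fin n))).card : ZMod 2)) := by
          rw [card_inf_cast]
          refine Finset.sum_congr rfl fun x _ => ?_
          conv_rhs => rw [Fin.prod_univ_succ]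
          simp only [Fin.cons_zero, Fin.cons_succ, hv]
        have hev : Even ((Finset.univ.inf
            (Fin.cons (f (t : Fin m) 0) (fun i : Fin (e + 1) => f j i.succ) : Fin (e + 2) → Finset (Fin n))).card) :=
          Nat.not_odd_iff_even.mp (hcon (t : Fin m) t.2)
        rw [heq, ZMod.natCast_eq_zero_iff_even.mpr hev, mul_zero]
      rw [Finset.sum_congr rfl fun t _ => h4 t] at h1
      simp at h1
    -- index the complement of I
    let J := {j : Fin m // j ∉ I}
    haveI : Fintype J := by unfold J; infer_instance
    set m' := Fintype.card J with hm'
    let eJ : Fin m' ≃ J := (Fintype.equivFin J).symm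
    let tch : J → Fin m := fun j => (hkey j.1 j.2).choose
    have tchI : ∀ j : J, tch j ∈ I := fun j => (hkey j.1 j.2).choose_spec.1
    have tchodd : ∀ j : J, Odd ((Finset.univ.inf
        (Fin.cons (f (tch j) 0) (fun i : Fin (e + 1) => f j.1 i.succ) : Fin (e + 2) → Finset (Fin n))).card) :=
      fun j => (hkey j.1 j.2).choose_spec.2
    let g : Fin m' → Fin (e + 1) → Finset (Fin n) := fun k =>
      Fin.cons (f (tch (eJ k)) 0 ∩ f ((eJ k : J) : Fin m) ((0 : Fin (e + 1)).succ))
        (fun i : Fin e => f ((eJ k : J) : Fin m) ((i.succ : Fin (e + 1)).succ))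
    have hginf : ∀ k, Finset.univ.inf (g k) =
        Finset.univ.inf
          (Fin.cons (f (tch (eJ k)) 0) (fun i : Fin (e + 1) => f ((eJ k : J) : Fin m) i.succ)
            : Fin (e + 2) → Finset (Fin n)) := by
      intro k
      ext x
      simp only [Finset.mem_inf, Finset.mem_univ, true_implies, Fin.forall_fin_succ,
        Fin.cons_zero, Fin.cons_succ, Finset.mem_inter, g]
      tauto
    have hgodd : ∀ k, Odd ((Finset.univ.inf (g k)).card) := by
      intro k
      rw [hginf k]
      exact tchodd (eJ k)
    have hgeven : ∀ q : Fin (e + 1) → Fin m', Function.Injective q →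
        Even ((Finset.univ.inf (fun i => g (q i) i)).card) := by
      intro q hq
      let B : Fin (e + 2) → Fin m :=
        Fin.cons (tch (eJ (q 0))) (fun i : Fin (e + 1) => ((eJ (q i) : J) : Fin m))
      have hBinj : Function.Injective B := by
        rw [Fin.cons_injective_iff]
        constructor
        · rintro ⟨i, hi⟩
          have hi' : ((eJ (q i) : J) : Fin m) = tch (eJ (q 0)) := hi
          exact (eJ (q i)).2 (by rw [hi']; exact tchI (eJ (q 0)))
        · exact Subtype.val_injective.comp ((eJ.injective.comp hq).comp (fun _ _ h => h))
      have hinfeq : (Finset.univ.inf (fun i => g (q i) i)) =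
          Finset.univ.inf (fun i : Fin (e + 2) => f (B i) i) := by
        ext x
        simp only [Finset.mem_inf, Finset.mem_univ, true_implies, Fin.forall_fin_succ,
          Fin.cons_zero, Fin.cons_succ, Finset.mem_inter, g, B]
        tauto
      rw [hinfeq]
      exact heven B hBinj
    have hm'le : m' ≤ (e + 1 - 1) * n := ih m' g hgodd hgeven
    have hsplit : m ≤ m' + Fintype.card I := by
      have hinj : Function.Injective (fun j : Fin m =>
          if h : j ∈ I then (Sum.inr ⟨j, h⟩ : J ⊕ I) else Sum.inl ⟨j, h⟩) := by
        intro a b hab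
        dsimp only at hab
        by_cases ha : a ∈ I <;> by_cases hb : b ∈ I
        · rw [dif_pos ha, dif_pos hb] at hab
          exact congrArg Subtype.val (Sum.inr.inj hab)
        · rw [dif_pos ha, dif_neg hb] at hab
          exact absurd hab (by simp)
        · rw [dif_neg ha, dif_pos hb] at hab
          exact absurd hab (by simp)
        · rw [dif_neg ha, dif_neg hb] at hab
          exact congrArg Subtype.val (Sum.inl.inj hab)
      calc m = Fintype.card (Fin m) := (Fintype.card_fin m).symm
        _ ≤ Fintype.card (J ⊕ I) := Fintype.card_le_of_injective _ hinj
        _ = m' + Fintype.card I := by rw [Fintype.card_sum]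
    have harith : (e + 1 + 1 - 1) * n = (e + 1 - 1) * n + n := by
      simp [Nat.succ_sub_one]
      ring
    calc m ≤ m' + Fintype.card I := hsplit
      _ ≤ (e + 1 - 1) * n + n := Nat.add_le_add hm'le hIcard
      _ = (e + 1 + 1 - 1) * n := harith.symm

end CrossOddtownAux

/-- If `𝒜` is a cross-`d`-wise Oddtown on an `n`-element ground set (a family of ordered
`d`-tuples of subsets of `[n]` such that `|A(1) ∩ ⋯ ∩ A(d)|` is odd for each `A ∈ 𝒜`, while
`|A_1(1) ∩ ⋯ ∩ A_d(d)|` is even for all pairwise distinct `A_1, …, A_d ∈ 𝒜`), then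
`|𝒜| ≤ (d-1)·n`. -/
theorem cross_d_wise_oddtown {n d : ℕ} (hd : 2 ≤ d)
    (𝒜 : Finset (Fin d → Finset (Fin n)))
    (hodd : ∀ A ∈ 𝒜, Odd (Finset.univ.inf A).card)
    (heven : ∀ B : Fin d → (Fin d → Finset (Fin n)),
      (∀ i, B i ∈ 𝒜) → Function.Injective B →
      Even (Finset.univ.inf (fun i : Fin d => B i i)).card) :
    𝒜.card ≤ (d - 1) * n := by
  classical
  let f : Fin 𝒜.card → Fin d → Finset (Fin n) := fun j => ((𝒜.equivFin.symm j : {A // A ∈ 𝒜}) : Fin d → Finset (Fin n))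
  have hodd' : ∀ j, Odd ((Finset.univ.inf (f j)).card) := fun j => hodd _ (𝒜.equivFin.symm j).2
  have heven' : ∀ g : Fin d → Fin 𝒜.card, Function.Injective g →
      Even ((Finset.univ.inf (fun i => f (g i) i)).card) := by
    intro g hg
    refine heven (fun i => f (g i)) (fun i => (𝒜.equivFin.symm (g i)).2) ?_
    exact Subtype.val_injective.comp ((𝒜.equivFin.symm.injective).comp hg)
  exact CrossOddtownAux.main n d hd 𝒜.card f hodd' heven'
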